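/- Let F be a tileable figure with equilibrium function eq and base vertex w₀. Then: (1) a vertex v∈V_F belongs to the forced component U_∞ if and only if h(v)=h'(v) for all h,h'∈H_F; and (2) an arc a=(v,v')∈E_F joins two vertices of the same forced component if and only if h(v')−h(v)=h'(v')−h'(v) for all h,h'∈H_F. -/

import Mathlib

open Classical

noncomputable section

abbrev Vtx : Type := ℤ × ℤ
abbrev GArc : Type := Vtx × Vtx

/-- `a` is an arc of the grid graph `Λ⁺`: its endpoints differ by a unit vector. -/
def IsArc (a : GArc) : Prop :=
  (a.2.1 - a.1.1).natAbs + (a.2.2 - a.1.2).natAbs = 1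

/-- reversal of an arc -/
def arev (a : GArc) : GArc := (a.2, a.1)

/-- `+1` if the cell with lower-left corner `c` is black, `-1` if it is white
(checkerboard coloring). -/
def colorSign (c : Vtx) : ℤ := if (c.1 + c.2) % 2 = 0 then 1 else -1

/-- spin of an arc: `+1` if a traveler along the arc has a white cell on its left,
`-1` otherwise. -/
def sp (a : GArc) : ℤ :=
  colorSign a.1 * ((a.2.2 - a.1.2) ^ 2 - (a.2.1 - a.1.1) ^ 2)

/-- the arcs of a path/cycle given by its list of vertices -/
def arcsOf (C : List Vtx) : List GArc := C.zip C.tail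

/-- sum of a function `g` on arcs over all the arcs of `C` (with multiplicity) -/
def sumOn (g : GArc → ℤ) (C : List Vtx) : ℤ := ((arcsOf C).map g).sum

/-- a (closed) cycle of the grid -/
def IsCycle (C : List Vtx) : Prop :=
  2 ≤ C.length ∧ C.head? = C.getLast? ∧ ∀ a ∈ arcsOf C, IsArc a

/-- an elementary cycle: no repeated vertex except the endpoints -/
def IsElemCycle (C : List Vtx) : Prop := IsCycle C ∧ C.dropLast.Nodup

/-- contribution of an arc to the winding number of a cycle around the center of
cell `c` (crossings of the horizontal ray going East from the center of `c`). -/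
def windTerm (c : Vtx) (a : GArc) : ℤ :=
  if a.1.1 = a.2.1 ∧ c.1 < a.1.1 ∧ min a.1.2 a.2.2 = c.2 then a.2.2 - a.1.2 else 0

/-- winding number of the cycle `C` around the center of the cell `c` -/
def wind (C : List Vtx) (c : Vtx) : ℤ := sumOn (windTerm c) C

/-- a cycle is clockwise when its winding number around any cell is nonpositive
(`-1` on enclosed cells, `0` elsewhere) -/
def IsClockwise (C : List Vtx) : Prop := ∀ c : Vtx, wind C c ≤ 0

/-- a cell is enclosed by `C` when the winding number of `C` around it is nonzero -/
def Encloses (C : List Vtx) (c : Vtx) : Prop := wind C c ≠ 0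

/-- number of black cells minus number of white cells enclosed by a clockwise cycle -/
def Dis (C : List Vtx) : ℤ := -∑ᶠ c : Vtx, wind C c * colorSign c

/-- 4-adjacency of cells (shared edge) -/
def adj4 (c c' : Vtx) : Prop := (c'.1 - c.1).natAbs + (c'.2 - c.2).natAbs = 1

/-- 8-adjacency of cells (shared vertex at least) -/
def adj8 (c c' : Vtx) : Prop := c ≠ c' ∧ (c'.1 - c.1).natAbs ≤ 1 ∧ (c'.2 - c.2).natAbs ≤ 1

/-- a figure: a nonempty, finite, 4-connected set of cells such that no vertex has
all its incident edges on the boundary (no diagonal pinch, so no vertex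
duplication is needed). -/
def IsFigure (F : Finset Vtx) : Prop :=
  F.Nonempty ∧
  (∀ c ∈ F, ∀ c' ∈ F, Relation.ReflTransGen (fun x y => x ∈ F ∧ y ∈ F ∧ adj4 x y) c c') ∧
  (∀ x y : ℤ,
    ¬((x - 1, y - 1) ∈ F ∧ (x, y) ∈ F ∧ (x, y - 1) ∉ F ∧ (x - 1, y) ∉ F) ∧
    ¬((x, y - 1) ∈ F ∧ (x - 1, y) ∈ F ∧ (x - 1, y - 1) ∉ F ∧ (x, y) ∉ F))

/-- one of the two cells adjacent to the edge `[a]` -/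
def cellA (a : GArc) : Vtx :=
  if a.1.2 = a.2.2 then (min a.1.1 a.2.1, a.1.2) else (a.1.1, min a.1.2 a.2.2)

/-- the other cell adjacent to the edge `[a]` -/
def cellB (a : GArc) : Vtx :=
  if a.1.2 = a.2.2 then (min a.1.1 a.2.1, a.1.2 - 1) else (a.1.1 - 1, min a.1.2 a.2.2)

/-- arcs of the graph `G_F`: the edge `[a]` is a side of a cell of `F` -/
def ArcF (F : Finset Vtx) (a : GArc) : Prop := IsArc a ∧ (cellA a ∈ F ∨ cellB a ∈ F)

/-- boundary arcs of `F`: exactly one of the two adjacent cells is in `F` -/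
def BoundaryArcF (F : Finset Vtx) (a : GArc) : Prop :=
  IsArc a ∧ ¬(cellA a ∈ F ↔ cellB a ∈ F)

/-- interior arcs of `F`: both adjacent cells are in `F` -/
def InteriorArcF (F : Finset Vtx) (a : GArc) : Prop :=
  IsArc a ∧ cellA a ∈ F ∧ cellB a ∈ F

/-- `v` is a corner of the cell with lower-left corner `c` -/
def isCorner (v c : Vtx) : Prop :=
  (v.1 = c.1 ∨ v.1 = c.1 + 1) ∧ (v.2 = c.2 ∨ v.2 = c.2 + 1)

/-- vertices of `G_F`: the corners of the cells of `F` -/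
def VF (F : Finset Vtx) : Set Vtx := {v | ∃ c ∈ F, isCorner v c}

/-- a cycle of the graph `G_F` -/
def IsCycleF (F : Finset Vtx) (C : List Vtx) : Prop :=
  2 ≤ C.length ∧ C.head? = C.getLast? ∧ ∀ a ∈ arcsOf C, ArcF F a

/-- an elementary cycle of the graph `G_F` -/
def IsElemCycleF (F : Finset Vtx) (C : List Vtx) : Prop :=
  IsCycleF F C ∧ C.dropLast.Nodup

/-- number of black cells of `F` minus number of white cells of `F` enclosed by
the clockwise cycle `C` -/
def DisF (F : Finset Vtx) (C : List Vtx) : ℤ := -∑ c ∈ F, wind C c * colorSign c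

/-- `ef` is skew-symmetric on the arcs of `G_F` -/
def IsSkewOnF (F : Finset Vtx) (ef : GArc → ℤ) : Prop :=
  ∀ a, ArcF F a → ef (arev a) = -ef a

/-- an equilibrium function of the figure `F` -/
def IsEquilibrium (F : Finset Vtx) (ef : GArc → ℤ) : Prop :=
  IsSkewOnF F ef ∧
  ∀ C, IsElemCycleF F C → IsClockwise C → sumOn sp C + sumOn ef C = 4 * DisF F C

/-- the four sides of the cell `c`, as canonically oriented arcs -/
def sides (c : Vtx) : List GArc :=
  [((c.1, c.2), (c.1 + 1, c.2)), ((c.1, c.2 + 1), (c.1 + 1, c.2 + 1)),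
   ((c.1, c.2), (c.1, c.2 + 1)), ((c.1 + 1, c.2), (c.1 + 1, c.2 + 1))]

/-- a domino tiling of `F`, encoded by the symmetric set `D` of the arcs whose
underlying edges are the central axes of its dominoes: every central axis has
both of its adjacent cells in `F` (dominoes are included in `F`), and every cell
of `F` is covered by exactly one domino (exactly one of its sides is a central
axis): no overlap and no gap. -/
def IsTiling (F : Finset Vtx) (D : Set GArc) : Prop :=
  (∀ a ∈ D, arev a ∈ D) ∧
  (∀ a ∈ D, IsArc a ∧ cellA a ∈ F ∧ cellB a ∈ F) ∧
  (∀ c ∈ F, ∃! a, a ∈ sides c ∧ a ∈ D)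

/-- characteristic function of a tiling: `1` on central axes, `0` elsewhere -/
def chi (D : Set GArc) (a : GArc) : ℤ := if a ∈ D then 1 else 0

/-- the height difference function of a tiling -/
def gT (ef : GArc → ℤ) (D : Set GArc) (a : GArc) : ℤ :=
  ef a - sp a + 2 * sp a * (1 - 2 * chi D a)

/-- the function `t`: `eq(a)-sp(a)+2` on interior arcs, `eq(a)+sp(a)` on boundary arcs -/
def tArc (F : Finset Vtx) (ef : GArc → ℤ) (a : GArc) : ℤ :=
  if cellA a ∈ F ∧ cellB a ∈ F then ef a - sp a + 2 else ef a + sp a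

/-- the function `b`: `eq(a)-sp(a)-2` on interior arcs, `eq(a)+sp(a)` on boundary arcs -/
def bArc (F : Finset Vtx) (ef : GArc → ℤ) (a : GArc) : ℤ :=
  if cellA a ∈ F ∧ cellB a ∈ F then ef a - sp a - 2 else ef a + sp a

/-- the 8-connected component of the cell `c` in the complement of `F` -/
def comp8 (F : Finset Vtx) (c : Vtx) : Set Vtx :=
  {c' | Relation.ReflTransGen (fun x y => x ∉ F ∧ y ∉ F ∧ adj8 x y) c c'}

/-- `c` belongs to a hole of `F` (a finite 8-connected component of the complement) -/
def IsHoleCell (F : Finset Vtx) (c : Vtx) : Prop := c ∉ F ∧ (comp8 F c).Finite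

/-- `c` belongs to `H_∞`, the infinite 8-connected component of the complement -/
def IsHinfCell (F : Finset Vtx) (c : Vtx) : Prop := c ∉ F ∧ ¬(comp8 F c).Finite

/-- `w` is a vertex of `V_F` on the boundary of `H_∞` -/
def OnOuterBoundary (F : Finset Vtx) (w : Vtx) : Prop :=
  w ∈ VF F ∧ ∃ c, IsHinfCell F c ∧ isCorner w c

/-- vertices on the boundary of `F` -/
def Vb (F : Finset Vtx) : Set Vtx :=
  {v | (∃ c ∈ F, isCorner v c) ∧ ∃ c, c ∉ F ∧ isCorner v c}

/-- `h` belongs to the class `H_F` of height functions -/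
def InHF (F : Finset Vtx) (ef : GArc → ℤ) (w0 : Vtx) (h : Vtx → ℤ) : Prop :=
  h w0 = 0 ∧ ∀ a, ArcF F a →
    (h a.2 - h a.1 = bArc F ef a ∨ h a.2 - h a.1 = tArc F ef a)

/-- `h` is the height function induced by the tiling `D` (based at `w0`) -/
def IsHeightOf (F : Finset Vtx) (ef : GArc → ℤ) (D : Set GArc) (w0 : Vtx)
    (h : Vtx → ℤ) : Prop :=
  h w0 = 0 ∧ ∀ a, ArcF F a → h a.2 - h a.1 = gT ef D a

/-- a critical cycle: an elementary cycle of `G_F` with `t(C) = 0` -/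
def CriticalCycle (F : Finset Vtx) (ef : GArc → ℤ) (C : List Vtx) : Prop :=
  IsElemCycleF F C ∧ sumOn (tArc F ef) C = 0

/-- a strongly critical cycle: critical, and `sp(a) = 1` on all its interior arcs -/
def StronglyCriticalCycle (F : Finset Vtx) (ef : GArc → ℤ) (C : List Vtx) : Prop :=
  CriticalCycle F ef C ∧ ∀ a ∈ arcsOf C, InteriorArcF F a → sp a = 1

/-- two vertices are critically equivalent when some critical cycle passes
through both -/
def critRel (F : Finset Vtx) (ef : GArc → ℤ) (v v' : Vtx) : Prop :=
  ∃ C, CriticalCycle F ef C ∧ v ∈ C ∧ v' ∈ C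

/-- the forced component of the vertex `v` (class of the equivalence relation
generated by critical equivalence) -/
def fcomp (F : Finset Vtx) (ef : GArc → ℤ) (v : Vtx) : Set Vtx :=
  {v' | v' ∈ VF F ∧ Relation.EqvGen (critRel F ef) v v'}

/-- `S` is a forced component of `F` -/
def IsForcedComponent (F : Finset Vtx) (ef : GArc → ℤ) (S : Set Vtx) : Prop :=
  ∃ v ∈ VF F, S = fcomp F ef v

/-- `a` is an arc of the graph `G_T` of the tiling `D` -/
def GTArc (F : Finset Vtx) (ef : GArc → ℤ) (D : Set GArc) (a : GArc) : Prop :=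
  ArcF F a ∧ gT ef D a = tArc F ef a

/-- there is a directed path in `G_T` from `u` to `v` -/
def GTReach (F : Finset Vtx) (ef : GArc → ℤ) (D : Set GArc) (u v : Vtx) : Prop :=
  Relation.ReflTransGen (fun x y => GTArc F ef D (x, y)) u v

/-- the result of an upward flip on the component `S`: add `4` on `S` -/
def flipUpAt (S : Set Vtx) (h : Vtx → ℤ) : Vtx → ℤ :=
  fun v => h v + S.indicator (fun _ => (4 : ℤ)) v

/-- the result of a downward flip on the component `S`: subtract `4` on `S` -/
def flipDownAt (S : Set Vtx) (h : Vtx → ℤ) : Vtx → ℤ :=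
  fun v => h v - S.indicator (fun _ => (4 : ℤ)) v

/-- `|h(v_S) - h'(v_S)|` for a representative `v_S` of `S` -/
def compDiff (h h' : Vtx → ℤ) (S : Set Vtx) : ℤ :=
  if hS : S.Nonempty then |h hS.some - h' hS.some| else 0

/-- the distance `Δ(h,h') = Σ_U |h(v_U) - h'(v_U)|` over forced components `U` -/
def Delta (F : Finset Vtx) (ef : GArc → ℤ) (h h' : Vtx → ℤ) : ℤ :=
  ∑ᶠ S ∈ {S : Set Vtx | IsForcedComponent F ef S}, compDiff h h' S

/-- a sequence of `n` allowed upward flips at forced components distinct from `U_∞` -/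
def UpFlipSeq (F : Finset Vtx) (ef : GArc → ℤ) (w0 : Vtx) (f : ℕ → Vtx → ℤ)
    (n : ℕ) : Prop :=
  ∀ i < n, ∃ S, IsForcedComponent F ef S ∧ S ≠ fcomp F ef w0 ∧
    InHF F ef w0 (f i) ∧ InHF F ef w0 (f (i + 1)) ∧ f (i + 1) = flipUpAt S (f i)

/-- a sequence of `n` allowed (upward or downward) flips, flipping at step `i`
the forced component `s i` (distinct from `U_∞`) -/
def FlipSeq (F : Finset Vtx) (ef : GArc → ℤ) (w0 : Vtx) (f : ℕ → Vtx → ℤ)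
    (s : ℕ → Set Vtx) (n : ℕ) : Prop :=
  ∀ i < n, IsForcedComponent F ef (s i) ∧ s i ≠ fcomp F ef w0 ∧
    InHF F ef w0 (f i) ∧ InHF F ef w0 (f (i + 1)) ∧
    (f (i + 1) = flipUpAt (s i) (f i) ∨ f (i + 1) = flipDownAt (s i) (f i))

/-- the four arcs of the two horizontal edges through `v` (central axes of the
pair of vertical dominoes covering the 2×2 square centered at `v`) -/
def hPairAxes (v : Vtx) : Set GArc :=
  {((v.1 - 1, v.2), v), (v, (v.1 - 1, v.2)), (v, (v.1 + 1, v.2)), ((v.1 + 1, v.2), v)}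

/-- the four arcs of the two vertical edges through `v` (central axes of the
pair of horizontal dominoes covering the 2×2 square centered at `v`) -/
def vPairAxes (v : Vtx) : Set GArc :=
  {((v.1, v.2 - 1), v), (v, (v.1, v.2 - 1)), (v, (v.1, v.2 + 1)), ((v.1, v.2 + 1), v)}

/-- a local flip: replace the pair of dominoes covering a 2×2 square by the
other pair covering the same square -/
def LocalFlip (D D' : Set GArc) : Prop :=
  ∃ v : Vtx, (hPairAxes v ⊆ D ∧ D' = (D \ hPairAxes v) ∪ vPairAxes v) ∨
             (vPairAxes v ⊆ D ∧ D' = (D \ vPairAxes v) ∪ hPairAxes v)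

/-- a sequence of `n` local flips between tilings of `F` -/
def LocalFlipSeq (F : Finset Vtx) (g : ℕ → Set GArc) (n : ℕ) : Prop :=
  ∀ i < n, IsTiling F (g i) ∧ IsTiling F (g (i + 1)) ∧ LocalFlip (g i) (g (i + 1))

/-- `h` is a maximal element of `(H_F, ≤)` -/
def MaximalInHF (F : Finset Vtx) (ef : GArc → ℤ) (w0 : Vtx) (h : Vtx → ℤ) : Prop :=
  InHF F ef w0 h ∧ ∀ h', InHF F ef w0 h' →
    (∀ v ∈ VF F, h v ≤ h' v) → ∀ v ∈ VF F, h' v = h v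

/-- `h` is a minimal element of `(H_F, ≤)` -/
def MinimalInHF (F : Finset Vtx) (ef : GArc → ℤ) (w0 : Vtx) (h : Vtx → ℤ) : Prop :=
  InHF F ef w0 h ∧ ∀ h', InHF F ef w0 h' →
    (∀ v ∈ VF F, h' v ≤ h v) → ∀ v ∈ VF F, h' v = h v

/-- an elementary cycle of `G_F` enclosing a single cell of `F` -/
def AroundSingleCell (F : Finset Vtx) (C : List Vtx) : Prop :=
  IsElemCycleF F C ∧ ∃ c ∈ F, ∀ c' : Vtx, wind C c' ≠ 0 ↔ c' = c

/-- a cycle of `G_F` following clockwise the boundary of a hole of `F`: it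
winds `-1` around each cell of the hole and `0` around every other cell -/
def IsClockwiseHoleContour (F : Finset Vtx) (C : List Vtx) : Prop :=
  IsElemCycleF F C ∧ ∃ c₀, IsHoleCell F c₀ ∧
    (∀ c ∈ comp8 F c₀, wind C c = -1) ∧ (∀ c ∉ comp8 F c₀, wind C c = 0)

end

section Aux

variable {F : Finset Vtx} {ef : GArc → ℤ} {w0 : Vtx} {h h0 : Vtx → ℤ} {a : GArc}

lemma arcsOf_cons_cons (a b : Vtx) (L : List Vtx) :
    arcsOf (a :: b :: L) = (a, b) :: arcsOf (b :: L) := rfl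

lemma arcsOf_cons_subset (a : Vtx) (L : List Vtx) : arcsOf L ⊆ arcsOf (a :: L) := by
  cases L with
  | nil => simp [arcsOf]
  | cons b M => rw [arcsOf_cons_cons]; exact List.subset_cons_self _ _

lemma isArc_arev (h : IsArc a) : IsArc (arev a) := by
  obtain ⟨⟨x1, y1⟩, ⟨x2, y2⟩⟩ := a
  unfold IsArc at *; simp only [arev] at *; omega

lemma colorSign_arev {x1 y1 x2 y2 : ℤ} (h : (x2 - x1).natAbs + (y2 - y1).natAbs = 1) :
    colorSign (x2, y2) = -colorSign (x1, y1) := by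
  unfold colorSign
  dsimp only
  split_ifs with h1 h2
  · exfalso; omega
  · norm_num
  · norm_num
  · exfalso; omega

lemma sp_arev (h : IsArc a) : sp (arev a) = -sp a := by
  obtain ⟨⟨x1, y1⟩, ⟨x2, y2⟩⟩ := a
  unfold IsArc at h; dsimp only at h
  unfold sp arev
  dsimp only
  rw [colorSign_arev h]
  ring

lemma cellA_arev (h : IsArc a) : cellA (arev a) = cellA a := by
  obtain ⟨⟨x1, y1⟩, ⟨x2, y2⟩⟩ := a
  unfold IsArc at h; dsimp only at h
  unfold cellA arev
  dsimp only
  by_cases hy : y1 = y2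
  · rw [if_pos hy.symm, if_pos hy]
    simp [min_comm x2 x1, hy]
  · have hx : x1 = x2 := by omega
    rw [if_neg (fun e => hy e.symm), if_neg hy]
    simp [hx, min_comm y2 y1]

lemma cellB_arev (h : IsArc a) : cellB (arev a) = cellB a := by
  obtain ⟨⟨x1, y1⟩, ⟨x2, y2⟩⟩ := a
  unfold IsArc at h; dsimp only at h
  unfold cellB arev
  dsimp only
  by_cases hy : y1 = y2
  · rw [if_pos hy.symm, if_pos hy]
    simp [min_comm x2 x1, hy]
  · have hx : x1 = x2 := by omega
    rw [if_neg (fun e => hy e.symm), if_neg hy]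
    simp [hx, min_comm y2 y1]

lemma arcF_arev (ha : ArcF F a) : ArcF F (arev a) :=
  ⟨isArc_arev ha.1, by rw [cellA_arev ha.1, cellB_arev ha.1]; exact ha.2⟩

lemma bArc_arev (hsk : IsSkewOnF F ef) (ha : ArcF F a) :
    bArc F ef (arev a) = -tArc F ef a := by
  have h1 := hsk a ha
  have h2 := sp_arev ha.1
  have hA := cellA_arev ha.1
  have hB := cellB_arev ha.1
  unfold bArc tArc
  rw [hA, hB]
  split_ifs with hc <;> rw [h1, h2] <;> ring

lemma tArc_arev (hsk : IsSkewOnF F ef) (ha : ArcF F a) :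
    tArc F ef (arev a) = -bArc F ef a := by
  have h1 := hsk a ha
  have h2 := sp_arev ha.1
  have hA := cellA_arev ha.1
  have hB := cellB_arev ha.1
  unfold bArc tArc
  rw [hA, hB]
  split_ifs with hc <;> rw [h1, h2] <;> ring

lemma bArc_le_tArc : bArc F ef a ≤ tArc F ef a := by
  unfold bArc tArc; split_ifs <;> omega

lemma arcF_mem_VF (ha : ArcF F a) : a.1 ∈ VF F ∧ a.2 ∈ VF F := by
  obtain ⟨⟨x1, y1⟩, ⟨x2, y2⟩⟩ := a
  obtain ⟨hiarc, hcell⟩ := ha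
  unfold IsArc at hiarc; dsimp only at hiarc
  have hm1 := min_le_left x1 x2; have hm2 := min_le_right x1 x2
  have hmc := min_choice x1 x2
  have hn1 := min_le_left y1 y2; have hn2 := min_le_right y1 y2
  have hnc := min_choice y1 y2
  by_cases hy : y1 = y2
  · unfold cellA cellB at hcell
    dsimp only at hcell
    rw [if_pos hy, if_pos hy] at hcell
    rcases hcell with hc | hc
    · exact ⟨⟨(min x1 x2, y1), hc, by unfold isCorner; dsimp only; omega⟩,
        ⟨(min x1 x2, y1), hc, by unfold isCorner; dsimp only; omega⟩⟩
    · exact ⟨⟨(min x1 x2, y1 - 1), hc, by unfold isCorner; dsimp only; omega⟩,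
        ⟨(min x1 x2, y1 - 1), hc, by unfold isCorner; dsimp only; omega⟩⟩
  · have hx : x1 = x2 := by omega
    unfold cellA cellB at hcell
    dsimp only at hcell
    rw [if_neg hy, if_neg hy] at hcell
    rcases hcell with hc | hc
    · exact ⟨⟨(x1, min y1 y2), hc, by unfold isCorner; dsimp only; omega⟩,
        ⟨(x1, min y1 y2), hc, by unfold isCorner; dsimp only; omega⟩⟩
    · exact ⟨⟨(x1 - 1, min y1 y2), hc, by unfold isCorner; dsimp only; omega⟩,
        ⟨(x1 - 1, min y1 y2), hc, by unfold isCorner; dsimp only; omega⟩⟩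

end Aux
section Walks

/-- `L` is a walk for the relation `T` -/
def TW (T : Vtx → Vtx → Prop) (L : List Vtx) : Prop := ∀ p ∈ arcsOf L, T p.1 p.2

lemma TW.of_cons {T : Vtx → Vtx → Prop} {L : List Vtx} {a : Vtx} (h : TW T (a :: L)) : TW T L :=
  fun p hp => h p (arcsOf_cons_subset a L hp)

lemma TW.append_right {T : Vtx → Vtx → Prop} :
    ∀ (l1 l2 : List Vtx), TW T (l1 ++ l2) → TW T l2
  | [], _, h => h
  | _ :: l1, l2, h => TW.append_right l1 l2 h.of_cons

lemma exists_walk {T : Vtx → Vtx → Prop} {x y : Vtx} (h : Relation.ReflTransGen T x y) :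
    ∃ L : List Vtx, L ≠ [] ∧ TW T L ∧ L.head? = some x ∧ L.getLast? = some y := by
  induction h using Relation.ReflTransGen.head_induction_on with
  | refl => exact ⟨[y], by simp, fun p hp => by simp [arcsOf] at hp, rfl, rfl⟩
  | @head a b hab hbx ih =>
    obtain ⟨L, hne, hw, hh, hl⟩ := ih
    cases L with
    | nil => exact absurd rfl hne
    | cons c M =>
      have hcb : c = b := by simpa using hh
      subst hcb
      refine ⟨a :: c :: M, by simp, ?_, rfl, by rw [List.getLast?_cons_cons]; exact hl⟩
      · intro p hp
        rw [arcsOf_cons_cons] at hp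
        rcases List.mem_cons.1 hp with h1 | h2
        · subst h1; exact hab
        · exact hw p h2

lemma exists_nodup_walk {T : Vtx → Vtx → Prop} :
    ∀ (L : List Vtx), TW T L → L ≠ [] →
      ∃ L', L' ≠ [] ∧ TW T L' ∧ L'.Nodup ∧ L'.head? = L.head? ∧ L'.getLast? = L.getLast?
  | [], _, h => absurd rfl h
  | [a], _, _ => ⟨[a], by simp, fun p hp => by simp [arcsOf] at hp, by simp, rfl, rfl⟩
  | a :: b :: M, hw, _ => by
    obtain ⟨R, hne, hRw, hRnd, hRh, hRl⟩ := exists_nodup_walk (b :: M) hw.of_cons (by simp)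
    by_cases ha : a ∈ R
    · obtain ⟨R1, R2, rfl⟩ := List.append_of_mem ha
      refine ⟨a :: R2, by simp, TW.append_right R1 _ hRw, ?_, by simp, ?_⟩
      · exact (List.sublist_append_right R1 (a :: R2)).nodup hRnd
      · rw [← List.getLast?_append_of_ne_nil R1 (l₂ := a :: R2) (by simp), hRl,
          List.getLast?_cons_cons]
    · cases R with
      | nil => exact absurd rfl hne
      | cons c Mr =>
        have hcb : c = b := by simpa using hRh
        subst hcb
        refine ⟨a :: c :: Mr, by simp, ?_, List.nodup_cons.2 ⟨ha, hRnd⟩, by simp,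
          by rw [List.getLast?_cons_cons, List.getLast?_cons_cons]; exact hRl⟩
        intro p hp
        rw [arcsOf_cons_cons] at hp
        rcases List.mem_cons.1 hp with h1 | h2
        · subst h1
          exact hw (a, c) (by rw [arcsOf_cons_cons]; exact List.mem_cons_self)
        · exact hRw p h2

lemma teleSum (h : Vtx → ℤ) :
    ∀ (L : List Vtx) (x y : Vtx), L.head? = some x → L.getLast? = some y →
      ((arcsOf L).map (fun p => h p.2 - h p.1)).sum = h y - h x
  | [], x, y, hx, _ => by simp at hx
  | [a], x, y, hx, hy => by
    simp at hx hy; subst hx; subst hy; simp [arcsOf]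
  | a :: b :: M, x, y, hx, hy => by
    simp at hx; subst hx
    rw [arcsOf_cons_cons, List.map_cons, List.sum_cons,
      teleSum h (b :: M) b y rfl (by rw [← List.getLast?_cons_cons (a := a)]; exact hy)]
    ring

lemma list_sum_le {α : Type*} (f g : α → ℤ) :
    ∀ l : List α, (∀ x ∈ l, f x ≤ g x) → (l.map f).sum ≤ (l.map g).sum
  | [], _ => le_refl 0
  | a :: l, h => by
    simp only [List.map_cons, List.sum_cons]
    have h1 := h a List.mem_cons_self
    have h2 := list_sum_le f g l (fun x hx => h x (List.mem_cons_of_mem _ hx))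
    omega

lemma list_force {α : Type*} (f g : α → ℤ) :
    ∀ l : List α, (∀ x ∈ l, f x ≤ g x) → (l.map f).sum = (l.map g).sum →
      ∀ x ∈ l, f x = g x
  | [], _, _, x, hx => absurd hx List.not_mem_nil
  | a :: l, h, hsum, x, hx => by
    simp only [List.map_cons, List.sum_cons] at hsum
    have h1 := h a List.mem_cons_self
    have h2 := list_sum_le f g l (fun z hz => h z (List.mem_cons_of_mem _ hz))
    have hfa : f a = g a := by omega
    have hrest : (l.map f).sum = (l.map g).sum := by omega
    rcases List.mem_cons.1 hx with h1' | h2'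
    · subst h1'; exact hfa
    · exact list_force f g l (fun z hz => h z (List.mem_cons_of_mem _ hz)) hrest x h2'

lemma arcsOf_getElem_mem (C : List Vtx) (k : ℕ) (hk : k + 1 < C.length) :
    (C[k]'(by omega), C[k+1]'hk) ∈ arcsOf C := by
  have hlz : k < (arcsOf C).length := by
    simp only [arcsOf, List.length_zip, List.length_tail]
    omega
  have he : (arcsOf C)[k]'hlz = (C[k]'(by omega), C[k+1]'hk) := by
    simp only [arcsOf, List.getElem_zip, List.getElem_tail]
  rw [← he]
  exact List.getElem_mem hlz

end Walks
section Crit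

variable {F : Finset Vtx} {ef : GArc → ℤ} {w0 : Vtx} {h h0 : Vtx → ℤ} {a : GArc}
  {C : List Vtx} {u v : Vtx}

/-- a tight arc of `G_F` relative to a height function -/
def Tight (F : Finset Vtx) (ef : GArc → ℤ) (h : Vtx → ℤ) (p q : Vtx) : Prop :=
  ArcF F (p, q) ∧ h q - h p = tArc F ef (p, q)

lemma criticalForcing (hC : CriticalCycle F ef C) (hh : InHF F ef w0 h) :
    ∀ p ∈ arcsOf C, h p.2 - h p.1 = tArc F ef p := by
  obtain ⟨⟨⟨hlen, hhl, harc⟩, hnd⟩, hts⟩ := hC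
  have hne : C ≠ [] := by intro e; subst e; simp at hlen
  obtain ⟨x, hx⟩ : ∃ x, C.head? = some x := by
    cases C with
    | nil => exact absurd rfl hne
    | cons c M => exact ⟨c, rfl⟩
  have hy : C.getLast? = some x := hhl ▸ hx
  have hsum0 : ((arcsOf C).map (fun p => h p.2 - h p.1)).sum = 0 := by
    rw [teleSum h C x x hx hy]; ring
  have hle : ∀ p ∈ arcsOf C, h p.2 - h p.1 ≤ tArc F ef p := by
    intro p hp
    rcases hh.2 p (harc p hp) with hb | ht
    · rw [hb]; exact bArc_le_tArc
    · rw [ht]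
  have hsum : ((arcsOf C).map (fun p => h p.2 - h p.1)).sum
      = ((arcsOf C).map (tArc F ef)).sum := by
    rw [hsum0]
    unfold sumOn at hts
    rw [hts]
  exact list_force _ _ (arcsOf C) hle hsum

lemma cyclePairDiff {h' : Vtx → ℤ} (hC : CriticalCycle F ef C) (hu : u ∈ C) (hv : v ∈ C)
    (hh : InHF F ef w0 h) (hh' : InHF F ef w0 h') : h v - h u = h' v - h' u := by
  have key : ∀ (i j : ℕ) (hi : i < C.length) (hj : j < C.length), i ≤ j →
      h (C[j]'hj) - h (C[i]'hi) = h' (C[j]'hj) - h' (C[i]'hi) := by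
    intro i j
    induction j with
    | zero =>
      intro hi hj hij
      have : i = 0 := Nat.le_zero.mp hij
      subst this; simp
    | succ n ih =>
      intro hi hj hij
      rcases Nat.lt_or_ge i (n + 1) with hlt | hge
      · have hin : i ≤ n := Nat.lt_succ_iff.mp hlt
        have hmem := arcsOf_getElem_mem C n hj
        have t1 := criticalForcing hC hh _ hmem
        have t2 := criticalForcing hC hh' _ hmem
        dsimp only at t1 t2
        have hrec := ih hi (Nat.lt_of_succ_lt hj) hin
        omega
      · have : i = n + 1 := le_antisymm hij hge
        subst this; simp
  obtain ⟨i, hi, rfl⟩ := List.mem_iff_getElem.mp hu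
  obtain ⟨j, hj, rfl⟩ := List.mem_iff_getElem.mp hv
  rcases le_total i j with hij | hij
  · exact key i j hi hj hij
  · have := key j i hj hi hij; omega

lemma lemA (hh : InHF F ef w0 h) {x y : Vtx} (hT : Tight F ef h x y)
    (hw : Relation.ReflTransGen (Tight F ef h) y x) :
    Relation.EqvGen (critRel F ef) x y := by
  by_cases hxy : x = y
  · subst hxy; exact Relation.EqvGen.refl _
  obtain ⟨L0, hne0, hw0', hh0', hl0⟩ := exists_walk hw
  obtain ⟨L, hne, hwL, hnd, hhL, hlL⟩ := exists_nodup_walk L0 hw0' hne0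
  rw [hh0'] at hhL
  rw [hl0] at hlL
  cases L with
  | nil => exact absurd rfl hne
  | cons c M =>
  have hcy : c = y := by simpa using hhL
  subst hcy
  have harcs : ∀ p ∈ arcsOf (x :: c :: M), Tight F ef h p.1 p.2 := by
    intro p hp
    rw [arcsOf_cons_cons] at hp
    rcases List.mem_cons.1 hp with h1 | h2
    · subst h1; exact hT
    · exact hwL p h2
  have hlast : (c :: M).getLast? = some x := hlL
  have hcrit : CriticalCycle F ef (x :: c :: M) := by
    refine ⟨⟨⟨by simp, ?_, ?_⟩, ?_⟩, ?_⟩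
    · rw [List.getLast?_cons_cons, hlast]; rfl
    · intro p hp; exact (harcs p hp).1
    · have hsplit : (c :: M).dropLast ++ [x] = c :: M :=
        List.dropLast_append_getLast? x (by rw [hlast]; rfl)
      have hnd2 : ((c :: M).dropLast ++ [x]).Nodup := by rw [hsplit]; exact hnd
      rw [List.nodup_append] at hnd2
      have hxnot : x ∉ (c :: M).dropLast := fun hxm => hnd2.2.2 x hxm x (by simp) rfl
      rw [List.dropLast_cons₂]
      exact List.nodup_cons.2 ⟨hxnot, hnd2.1⟩
    · show sumOn (tArc F ef) (x :: c :: M) = 0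
      unfold sumOn
      have : ((arcsOf (x :: c :: M)).map (tArc F ef)).sum
          = ((arcsOf (x :: c :: M)).map (fun p => h p.2 - h p.1)).sum := by
        apply congrArg
        apply List.map_congr_left
        intro p hp
        exact ((harcs p hp).2).symm
      rw [this, teleSum h (x :: c :: M) x x rfl (by rw [List.getLast?_cons_cons]; exact hlast)]
      ring
  exact Relation.EqvGen.rel _ _ ⟨x :: c :: M, hcrit, by simp, by simp⟩

lemma walk_pair (hh : InHF F ef w0 h) :
    ∀ {p q : Vtx}, Relation.ReflTransGen (Tight F ef h) p q →
      Relation.ReflTransGen (Tight F ef h) q p → Relation.EqvGen (critRel F ef) p q := by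
  intro p q h1
  induction h1 using Relation.ReflTransGen.head_induction_on with
  | refl => intro _; exact Relation.EqvGen.refl _
  | @head a b hab hbq ih =>
    intro hqa
    have h1 : Relation.EqvGen (critRel F ef) a b := lemA hh hab (hbq.trans hqa)
    exact Relation.EqvGen.trans _ _ _ h1 (ih (hqa.tail hab))

end Crit
section Flips

variable {F : Finset Vtx} {ef : GArc → ℤ} {w0 : Vtx} {h : Vtx → ℤ}

lemma flip_down (hh : InHF F ef w0 h) (hsk : IsSkewOnF F ef) (v : Vtx)
    (hnw : ¬ Relation.ReflTransGen (Tight F ef h) v w0) :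
    InHF F ef w0 (fun z => if Relation.ReflTransGen (Tight F ef h) v z then h z - 4 else h z) := by
  constructor
  · dsimp only; rw [if_neg hnw]; exact hh.1
  · intro a ha
    obtain ⟨x, y⟩ := a
    have hd := hh.2 (x, y) ha
    dsimp only at hd ⊢
    by_cases p1 : Relation.ReflTransGen (Tight F ef h) v x <;>
      by_cases p2 : Relation.ReflTransGen (Tight F ef h) v y
    · rw [if_pos p1, if_pos p2]
      have he : h y - 4 - (h x - 4) = h y - h x := by ring
      rw [he]; exact hd
    · rw [if_pos p1, if_neg p2]
      have hnt : ¬ Tight F ef h x y := fun ht => p2 (p1.tail ht)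
      have hbd : h y - h x = bArc F ef (x, y) := by
        rcases hd with hb | ht2
        · exact hb
        · exact absurd ⟨ha, ht2⟩ hnt
      have hne : bArc F ef (x, y) ≠ tArc F ef (x, y) := fun e => hnt ⟨ha, by rw [hbd, e]⟩
      have hint : cellA (x, y) ∈ F ∧ cellB (x, y) ∈ F := by
        by_contra hc
        exact hne (by unfold bArc tArc; rw [if_neg hc, if_neg hc])
      right
      unfold tArc
      rw [if_pos hint]
      unfold bArc at hbd
      rw [if_pos hint] at hbd
      omega
    · rw [if_neg p1, if_pos p2]
      have hrev : ArcF F (y, x) := arcF_arev (a := (x, y)) ha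
      have hnt : ¬ Tight F ef h y x := fun ht => p1 (p2.tail ht)
      have hd' := hh.2 (y, x) hrev
      dsimp only at hd'
      have hbd : h x - h y = bArc F ef (y, x) := by
        rcases hd' with hb | ht2
        · exact hb
        · exact absurd ⟨hrev, ht2⟩ hnt
      have hval : bArc F ef (y, x) = -tArc F ef (x, y) := bArc_arev hsk (a := (x, y)) ha
      have hne : bArc F ef (y, x) ≠ tArc F ef (y, x) := fun e => hnt ⟨hrev, by rw [hbd, e]⟩
      have hint' : cellA (y, x) ∈ F ∧ cellB (y, x) ∈ F := by
        by_contra hc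
        exact hne (by unfold bArc tArc; rw [if_neg hc, if_neg hc])
      have hint : cellA (x, y) ∈ F ∧ cellB (x, y) ∈ F := by
        rw [← cellA_arev (a := (x, y)) ha.1, ← cellB_arev (a := (x, y)) ha.1]
        exact hint'
      have ht : h y - h x = tArc F ef (x, y) := by rw [hval] at hbd; omega
      left
      unfold bArc
      rw [if_pos hint]
      unfold tArc at ht
      rw [if_pos hint] at ht
      omega
    · rw [if_neg p1, if_neg p2]; exact hd

lemma flip_up (hh : InHF F ef w0 h) (hsk : IsSkewOnF F ef) (v : Vtx)
    (hnw : ¬ Relation.ReflTransGen (Tight F ef h) w0 v) :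
    InHF F ef w0 (fun z => if Relation.ReflTransGen (Tight F ef h) z v then h z + 4 else h z) := by
  constructor
  · dsimp only; rw [if_neg hnw]; exact hh.1
  · intro a ha
    obtain ⟨x, y⟩ := a
    have hd := hh.2 (x, y) ha
    dsimp only at hd ⊢
    by_cases p1 : Relation.ReflTransGen (Tight F ef h) x v <;>
      by_cases p2 : Relation.ReflTransGen (Tight F ef h) y v
    · rw [if_pos p1, if_pos p2]
      have he : h y + 4 - (h x + 4) = h y - h x := by ring
      rw [he]; exact hd
    · rw [if_pos p1, if_neg p2]
      -- arc going out of the co-reachable set: it is tight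
      have hrev : ArcF F (y, x) := arcF_arev (a := (x, y)) ha
      have hnt : ¬ Tight F ef h y x := fun ht => p2 (Relation.ReflTransGen.head ht p1)
      have hd' := hh.2 (y, x) hrev
      dsimp only at hd'
      have hbd : h x - h y = bArc F ef (y, x) := by
        rcases hd' with hb | ht2
        · exact hb
        · exact absurd ⟨hrev, ht2⟩ hnt
      have hval : bArc F ef (y, x) = -tArc F ef (x, y) := bArc_arev hsk (a := (x, y)) ha
      have hne : bArc F ef (y, x) ≠ tArc F ef (y, x) := fun e => hnt ⟨hrev, by rw [hbd, e]⟩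
      have hint' : cellA (y, x) ∈ F ∧ cellB (y, x) ∈ F := by
        by_contra hc
        exact hne (by unfold bArc tArc; rw [if_neg hc, if_neg hc])
      have hint : cellA (x, y) ∈ F ∧ cellB (x, y) ∈ F := by
        rw [← cellA_arev (a := (x, y)) ha.1, ← cellB_arev (a := (x, y)) ha.1]
        exact hint'
      have ht : h y - h x = tArc F ef (x, y) := by rw [hval] at hbd; omega
      left
      unfold bArc
      rw [if_pos hint]
      unfold tArc at ht
      rw [if_pos hint] at ht
      omega
    · rw [if_neg p1, if_pos p2]
      -- arc coming into the co-reachable set: not tight, so at b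
      have hnt : ¬ Tight F ef h x y := fun ht => p1 (Relation.ReflTransGen.head ht p2)
      have hbd : h y - h x = bArc F ef (x, y) := by
        rcases hd with hb | ht2
        · exact hb
        · exact absurd ⟨ha, ht2⟩ hnt
      have hne : bArc F ef (x, y) ≠ tArc F ef (x, y) := fun e => hnt ⟨ha, by rw [hbd, e]⟩
      have hint : cellA (x, y) ∈ F ∧ cellB (x, y) ∈ F := by
        by_contra hc
        exact hne (by unfold bArc tArc; rw [if_neg hc, if_neg hc])
      right
      unfold tArc
      rw [if_pos hint]
      unfold bArc at hbd
      rw [if_pos hint] at hbd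
      omega
    · rw [if_neg p1, if_neg p2]; exact hd

end Flips
section Main

variable {F : Finset Vtx} {ef : GArc → ℤ} {w0 : Vtx} {h0 : Vtx → ℤ}

lemma interiorTight (hh0 : InHF F ef w0 h0) (hsk : IsSkewOnF F ef) {x y : Vtx}
    (ha : ArcF F (x, y)) (htight : h0 y - h0 x = tArc F ef (x, y))
    (hAll : ∀ h h' : Vtx → ℤ, InHF F ef w0 h → InHF F ef w0 h' → h y - h x = h' y - h' x) :
    Relation.EqvGen (critRel F ef) x y := by
  have hT : Tight F ef h0 x y := ⟨ha, htight⟩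
  by_cases hqp : Relation.ReflTransGen (Tight F ef h0) y x
  · exact lemA hh0 hT hqp
  · have hqw : Relation.ReflTransGen (Tight F ef h0) y w0 := by
      by_contra hc
      have h1 := flip_down hh0 hsk y hc
      have heq := hAll h0 _ hh0 h1
      rw [if_pos Relation.ReflTransGen.refl, if_neg hqp] at heq
      omega
    have hwp : Relation.ReflTransGen (Tight F ef h0) w0 x := by
      by_contra hc
      have h1 := flip_up hh0 hsk x hc
      have heq := hAll h0 _ hh0 h1
      rw [if_neg hqp, if_pos Relation.ReflTransGen.refl] at heq
      omega
    exact lemA hh0 hT (hqw.trans hwp)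

end Main

/-- (1) a vertex belongs to `U_∞` iff all functions of `H_F`
agree at it; (2) an arc of `E_F` joins two vertices of the same forced
component iff all functions of `H_F` have the same difference along it. -/
theorem Uinf_and_same_component_characterization (F : Finset Vtx)
    (hF : IsFigure F) (ef : GArc → ℤ) (hef : IsEquilibrium F ef)
    (w0 : Vtx) (hw0 : OnOuterBoundary F w0)
    (htile : ∃ h : Vtx → ℤ, InHF F ef w0 h) :
    (∀ v ∈ VF F, (v ∈ fcomp F ef w0 ↔
      ∀ h h' : Vtx → ℤ, InHF F ef w0 h → InHF F ef w0 h' → h v = h' v)) ∧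
    (∀ a : GArc, ArcF F a →
      ((∃ S : Set Vtx, IsForcedComponent F ef S ∧ a.1 ∈ S ∧ a.2 ∈ S) ↔
       ∀ h h' : Vtx → ℤ, InHF F ef w0 h → InHF F ef w0 h' →
         h a.2 - h a.1 = h' a.2 - h' a.1)) := by
  obtain ⟨h0, hh0⟩ := htile
  have hsk := hef.1
  have eqvImp : ∀ u v : Vtx, Relation.EqvGen (critRel F ef) u v →
      ∀ h h' : Vtx → ℤ, InHF F ef w0 h → InHF F ef w0 h' →
        h v - h u = h' v - h' u := by
    intro u v huv
    induction huv with
    | rel a b hab =>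
      obtain ⟨C, hC, haC, hbC⟩ := hab
      intro h h' hh hh'
      exact cyclePairDiff hC haC hbC hh hh'
    | refl a => intro h h' _ _; ring
    | symm a b _ ih => intro h h' hh hh'; have := ih h h' hh hh'; omega
    | trans a b c _ _ ih1 ih2 =>
      intro h h' hh hh'
      have := ih1 h h' hh hh'
      have := ih2 h h' hh hh'
      omega
  constructor
  · intro v hvVF
    constructor
    · intro hvmem h h' hh hh'
      have hEq : Relation.EqvGen (critRel F ef) w0 v := hvmem.2
      have := eqvImp w0 v hEq h h' hh hh'
      have e1 := hh.1
      have e2 := hh'.1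
      omega
    · intro hAll
      have hS : Relation.ReflTransGen (Tight F ef h0) v w0 := by
        by_contra hc
        have h1 := flip_down hh0 hsk v hc
        have heq := hAll h0 _ hh0 h1
        rw [if_pos Relation.ReflTransGen.refl] at heq
        omega
      have hS' : Relation.ReflTransGen (Tight F ef h0) w0 v := by
        by_contra hc
        have h1 := flip_up hh0 hsk v hc
        have heq := hAll h0 _ hh0 h1
        rw [if_pos Relation.ReflTransGen.refl] at heq
        omega
      exact ⟨hvVF, Relation.EqvGen.symm _ _ (walk_pair hh0 hS hS')⟩
  · intro a ha
    constructor
    · rintro ⟨S, ⟨u, huVF, rfl⟩, h1, h2⟩ h h' hh hh'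
      have e1 := eqvImp u a.1 h1.2 h h' hh hh'
      have e2 := eqvImp u a.2 h2.2 h h' hh hh'
      omega
    · intro hAll
      obtain ⟨x, y⟩ := a
      have hmem := arcF_mem_VF (F := F) (a := (x, y)) ha
      have key : Relation.EqvGen (critRel F ef) x y := by
        have hd0 : h0 y - h0 x = bArc F ef (x, y) ∨ h0 y - h0 x = tArc F ef (x, y) :=
          hh0.2 (x, y) ha
        rcases hd0 with hb | ht
        · -- the common difference is b
          by_cases he : bArc F ef (x, y) = tArc F ef (x, y)
          · exact interiorTight hh0 hsk ha (by rw [hb, he]) hAll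
          · -- use the reversed arc, which is tight
            have harev : ArcF F (y, x) := arcF_arev (a := (x, y)) ha
            have hta : tArc F ef (y, x) = -bArc F ef (x, y) := tArc_arev hsk (a := (x, y)) ha
            have htight : h0 x - h0 y = tArc F ef (y, x) := by rw [hta]; omega
            have hAll' : ∀ h h' : Vtx → ℤ, InHF F ef w0 h → InHF F ef w0 h' →
                h x - h y = h' x - h' y := by
              intro h h' hh hh'
              have := hAll h h' hh hh'
              dsimp only at this
              omega
            exact Relation.EqvGen.symm _ _ (interiorTight hh0 hsk harev htight hAll')
        · exact interiorTight hh0 hsk ha ht hAll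
      exact ⟨fcomp F ef x, ⟨x, hmem.1, rfl⟩, ⟨hmem.1, Relation.EqvGen.refl _⟩,
        ⟨hmem.2, key⟩⟩
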